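/- Let G be a (simple) graph and let 0 < k < ω be such that every vertex of G has degree at most k. Then there is a partition of the vertex set of G into k² pieces A₀, …, A_{k²−1} such that for every i < k² and every vertex v, v is adjacent to at most one element of A_i. -/

import Mathlib

open SimpleGraph

/-- Greedy coloring: a finite graph all of whose vertices have fewer than `n` neighbours is
`n`-colorable. -/
lemma greedy_colorable : ∀ (m : ℕ) {V : Type*} [Fintype V] (G : SimpleGraph V),
    Fintype.card V = m → ∀ {n : ℕ}, (∀ v, (G.neighborSet v).ncard < n) → G.Colorable n := by
  intro m
  induction m with
  | zero =>
    intro V _ G hcard n h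
    have : IsEmpty V := Fintype.card_eq_zero_iff.mp hcard
    exact Colorable.of_isEmpty (G := G) n
  | succ m ih =>
    intro V _ G hcard n h
    classical
    have hne : Nonempty V := Fintype.card_pos_iff.mp (by omega)
    obtain ⟨v0⟩ := hne
    have hn : 0 < n := lt_of_le_of_lt (Nat.zero_le _) (h v0)
    let V' := {w : V // w ≠ v0}
    let G' : SimpleGraph V' := G.comap Subtype.val
    have hcard' : Fintype.card V' = m := by
      have := Fintype.card_subtype_compl (fun w : V => w = v0)
      simp only [Fintype.card_subtype_eq] at this
      simpa [V', hcard] using this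
    have hdeg' : ∀ w : V', (G'.neighborSet w).ncard < n := by
      intro w
      refine lt_of_le_of_lt ?_ (h w.val)
      have hsub : Subtype.val '' (G'.neighborSet w) ⊆ G.neighborSet w.val := by
        rintro x ⟨y, hy, rfl⟩
        exact hy
      calc (G'.neighborSet w).ncard = (Subtype.val '' (G'.neighborSet w)).ncard :=
            (Set.ncard_image_of_injective _ Subtype.val_injective).symm
        _ ≤ (G.neighborSet w.val).ncard :=
            Set.ncard_le_ncard hsub (Set.toFinite _)
    obtain ⟨C'⟩ := ih G' hcard' hdeg'
    -- pick a color unused on the neighbours of `v0`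
    let f : V → Fin n := fun w => if hw : w = v0 then ⟨0, hn⟩ else C' ⟨w, hw⟩
    let s : Finset (Fin n) := (G.neighborSet v0).toFinset.image f
    have hscard : s.card < n := by
      refine lt_of_le_of_lt (Finset.card_image_le) ?_
      rw [Set.toFinset_card, ← Nat.card_eq_fintype_card, Nat.card_coe_set_eq]
      exact h v0
    have : ∃ c : Fin n, c ∉ s := by
      by_contra hc
      push_neg at hc
      have : s = Finset.univ := Finset.eq_univ_iff_forall.mpr hc
      rw [this, Finset.card_univ, Fintype.card_fin] at hscard
      omega
    obtain ⟨c, hc⟩ := this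
    refine ⟨Coloring.mk (fun v => if hv : v = v0 then c else C' ⟨v, hv⟩) ?_⟩
    intro a b hab
    have hne : a ≠ b := hab.ne
    by_cases ha : a = v0 <;> by_cases hb : b = v0
    · exact absurd (ha.trans hb.symm) hne
    · rw [dif_pos ha, dif_neg hb]
      intro hEq
      apply hc
      rw [hEq]
      refine Finset.mem_image.mpr ⟨b, ?_, ?_⟩
      · rw [Set.mem_toFinset]; exact ha ▸ hab
      · simp only [f, dif_neg hb]
    · rw [dif_pos hb, dif_neg ha]
      intro hEq
      apply hc
      rw [← hEq]
      refine Finset.mem_image.mpr ⟨a, ?_, ?_⟩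
      · rw [Set.mem_toFinset]; exact hb ▸ hab.symm
      · simp only [f, dif_neg ha]
    · simp only [dif_neg ha, dif_neg hb]
      exact C'.valid (by exact hab : G'.Adj ⟨a, ha⟩ ⟨b, hb⟩)

/-- Compactness: a graph all of whose vertices have finitely many, fewer than `n`,
neighbours is `n`-colorable. -/
lemma colorable_of_ncard_lt {V : Type*} (G : SimpleGraph V) {n : ℕ}
    (h : ∀ v, (G.neighborSet v).Finite ∧ (G.neighborSet v).ncard < n) : G.Colorable n := by
  refine G.nonempty_hom_of_forall_finite_subgraph_hom fun G' hG' => ?_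
  haveI : Fintype G'.verts := hG'.fintype
  have hdeg : ∀ v : G'.verts, (G'.coe.neighborSet v).ncard < n := by
    intro v
    refine lt_of_le_of_lt ?_ (h v.val).2
    have hsub : Subtype.val '' (G'.coe.neighborSet v) ⊆ G.neighborSet v.val := by
      rintro x ⟨y, hy, rfl⟩
      exact G'.adj_sub hy
    calc (G'.coe.neighborSet v).ncard = (Subtype.val '' (G'.coe.neighborSet v)).ncard :=
          (Set.ncard_image_of_injective _ Subtype.val_injective).symm
      _ ≤ (G.neighborSet v.val).ncard := Set.ncard_le_ncard hsub (h v.val).1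
  exact Classical.choice (greedy_colorable (Fintype.card G'.verts) G'.coe rfl hdeg)

/-- If every vertex of a graph `G` has degree at most `k` (where `0 < k < ω`), then the
vertex set can be partitioned into `k²` pieces `A₀, …, A_{k²−1}` such that every vertex is
adjacent to at most one element of each piece. -/
theorem exists_partition_of_bounded_degree {V : Type*} (G : SimpleGraph V) (k : ℕ)
    (hk : 0 < k) (hdeg : ∀ v : V, Cardinal.mk (G.neighborSet v) ≤ k) :
    ∃ A : Fin (k ^ 2) → Set V,
      (∀ v : V, ∃! i, v ∈ A i) ∧
      ∀ (i : Fin (k ^ 2)) (v : V), (A i ∩ G.neighborSet v).Subsingleton := by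
  classical
  have hfin : ∀ v, (G.neighborSet v).Finite := fun v =>
    Cardinal.lt_aleph0_iff_set_finite.mp (lt_of_le_of_lt (hdeg v) (Cardinal.nat_lt_aleph0 k))
  have hncard : ∀ v, (G.neighborSet v).ncard ≤ k := by
    intro v
    rw [← Nat.card_coe_set_eq, Nat.card, ← Cardinal.toNat_natCast k]
    exact Cardinal.toNat_le_toNat (hdeg v) (Cardinal.nat_lt_aleph0 k)
  -- the "square" graph: two vertices are adjacent iff they are distinct and have a common
  -- neighbour in `G`
  let H : SimpleGraph V :=
    { Adj := fun u w => u ≠ w ∧ ∃ v, G.Adj v u ∧ G.Adj v w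
      symm := ⟨by
        rintro u w ⟨hne, v, h1, h2⟩
        exact ⟨hne.symm, v, h2, h1⟩⟩
      loopless := ⟨fun u h => h.1 rfl⟩ }
  have hHdeg : ∀ u, (H.neighborSet u).Finite ∧ (H.neighborSet u).ncard < k ^ 2 := by
    intro u
    set T : Finset V :=
      ((hfin u).toFinset).biUnion (fun v => ((hfin v).toFinset).erase u) with hT
    have hsub : H.neighborSet u ⊆ ↑T := by
      rintro w ⟨hne, v, h1, h2⟩
      rw [hT, Finset.coe_biUnion]
      refine Set.mem_biUnion (show v ∈ ((hfin u).toFinset : Set V) by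
        simp only [Finset.mem_coe, Set.Finite.mem_toFinset]; exact h1.symm) ?_
      rw [Finset.coe_erase]
      exact ⟨(Set.Finite.mem_toFinset _).mpr h2, fun hw => hne (hw.symm ▸ rfl)⟩
    have hTcard : T.card < k ^ 2 := by
      have h1 : T.card ≤ ∑ v ∈ (hfin u).toFinset, (((hfin v).toFinset).erase u).card :=
        Finset.card_biUnion_le
      have h2 : ∀ v ∈ (hfin u).toFinset, (((hfin v).toFinset).erase u).card ≤ k - 1 := by
        intro v hv
        rw [Set.Finite.mem_toFinset] at hv
        have hu : u ∈ (hfin v).toFinset := by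
          rw [Set.Finite.mem_toFinset]
          exact (G.mem_neighborSet v u).mpr ((G.mem_neighborSet u v).mp hv).symm
        rw [Finset.card_erase_of_mem hu]
        have : (hfin v).toFinset.card ≤ k := by
          rw [← Set.ncard_eq_toFinset_card _ (hfin v)]; exact hncard v
        omega
      calc T.card ≤ ∑ v ∈ (hfin u).toFinset, (((hfin v).toFinset).erase u).card := h1
        _ ≤ (hfin u).toFinset.card * (k - 1) := by
            refine le_trans (Finset.sum_le_card_nsmul _ _ _ h2) (le_of_eq ?_)
            simp [smul_eq_mul]
        _ ≤ k * (k - 1) := by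
            have : (hfin u).toFinset.card ≤ k := by
              rw [← Set.ncard_eq_toFinset_card _ (hfin u)]; exact hncard u
            exact Nat.mul_le_mul_right _ this
        _ < k ^ 2 := by
            have : k - 1 < k := by omega
            calc k * (k - 1) < k * k := (Nat.mul_lt_mul_left hk).mpr this
              _ = k ^ 2 := (sq k).symm
    refine ⟨T.finite_toSet.subset hsub, ?_⟩
    calc (H.neighborSet u).ncard ≤ (↑T : Set V).ncard :=
          Set.ncard_le_ncard hsub T.finite_toSet
      _ = T.card := Set.ncard_coe_finset T
      _ < k ^ 2 := hTcard
  obtain ⟨C⟩ := colorable_of_ncard_lt H hHdeg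
  refine ⟨fun i => C ⁻¹' {i}, ?_, ?_⟩
  · intro v
    exact ⟨C v, rfl, fun i hi => hi.symm⟩
  · intro i v x hx y hy
    by_contra hxy
    have hadj : H.Adj x y := ⟨hxy, v, hx.2, hy.2⟩
    exact C.valid hadj (hx.1.trans hy.1.symm)
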